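/- Let Fib be the infinite Fibonacci word, F_k the Fibonacci numbers (F_0 = F_1 = 1, F_2 = 2, F_3 = 3, F_4 = 5, ...), Cov_Fib[ℓ] the length of the shortest cover of Fib[0..ℓ), and let S = {1, 2, 3, 5} ∪ {F_k − 1 : k ≥ 4} ∪ {2F_k − 1 : k ≥ 4}. Then: (a) for every ℓ ≥ 1, the prefix Fib[0..ℓ) is superprimitive (i.e., Cov_Fib[ℓ] = ℓ) if and only if ℓ ∈ S; and (b) for every ℓ ≥ 1, Cov_Fib[ℓ] ∈ S. -/

import Mathlib

section Defs

variable {α : Type*}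

/-- `C` occurs in `T` at starting position `i`. -/
def OccursAt (C T : List α) (i : ℕ) : Prop :=
  i + C.length ≤ T.length ∧ (T.drop i).take C.length = C

/-- `C` is a cover of `T`: `C` occurs in `T` and every position of `T`
lies within an occurrence of `C`. -/
def IsCover (C T : List α) : Prop :=
  (∃ i, OccursAt C T i) ∧
    ∀ q, q < T.length → ∃ i, OccursAt C T i ∧ i ≤ q ∧ q < i + C.length

/-- A border of `T` is both a prefix and a suffix of `T`. -/
def IsBorder (B T : List α) : Prop := B <+: T ∧ B <:+ T

/-- `p` is a period of `U`: `U[i] = U[i+p]` for all `0 ≤ i < |U| - p`. -/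
def IsPeriod (p : ℕ) (U : List α) : Prop :=
  0 < p ∧ ∀ i, i + p < U.length → U[i]? = U[i + p]?

/-- `U` is aperiodic: its smallest period `p` satisfies `2p > |U|`
(equivalently, every period `p` of `U` satisfies `2p > |U|`). -/
def StrAperiodic (U : List α) : Prop := ∀ p, IsPeriod p U → U.length < 2 * p

/-- A nonempty string `X` is primitive if `X = Y^t` implies `t = 1`. -/
def StrPrimitive (X : List α) : Prop :=
  X ≠ [] ∧ ∀ (Y : List α) (t : ℕ), X = (List.replicate t Y).flatten → t = 1

/-- A string is superprimitive if it has no proper cover. -/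
def Superprimitive (T : List α) : Prop :=
  ¬ ∃ C : List α, IsCover C T ∧ C.length < T.length

/-- The length of the shortest cover of `T`. -/
noncomputable def covLen (T : List α) : ℕ :=
  sInf {c | ∃ C : List α, C.length = c ∧ IsCover C T}

/-- `{a, a+p, ..., a+(t-1)p}` is a maximal arithmetic progression with
difference `p` inside the set `S`. -/
def MaxProg (S : Set ℕ) (p a t : ℕ) : Prop :=
  0 < t ∧ (∀ r, r < t → a + r * p ∈ S) ∧ (∀ b, b + p = a → b ∉ S) ∧ a + t * p ∉ S

end Defs

/-- Fibonacci strings over `Bool` (`true` = a, `false` = b):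
`Fib_0 = b`, `Fib_1 = a`, `Fib_m = Fib_{m-1} Fib_{m-2}`. -/
def fibWord : ℕ → List Bool
  | 0 => [false]
  | 1 => [true]
  | (m + 2) => fibWord (m + 1) ++ fibWord m

/-- Fibonacci numbers `F_k = |Fib_k|`: `F_0 = F_1 = 1`, `F_2 = 2`, `F_3 = 3`, ... -/
def F (k : ℕ) : ℕ := (fibWord k).length

/-- The `n`-th letter of the infinite Fibonacci word (each `Fib_m`, `m ≥ 1`,
is a prefix of the infinite word, and `F_{n+2} > n`). -/
def fibInf (n : ℕ) : Bool := (fibWord (n + 2)).getD n false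

/-- The length-`ℓ` prefix `Fib[0..ℓ)` of the infinite Fibonacci word. -/
def fibPrefix (ℓ : ℕ) : List Bool := (List.range ℓ).map fibInf

/-- `Cov_Fib[ℓ]`: the length of the shortest cover of `Fib[0..ℓ)`. -/
noncomputable def covFib (ℓ : ℕ) : ℕ := covLen (fibPrefix ℓ)

/-- `S = {1,2,3,5} ∪ {F_k - 1 : k ≥ 4} ∪ {2F_k - 1 : k ≥ 4}`. -/
def SFib : Set ℕ :=
  ({1, 2, 3, 5} : Set ℕ) ∪ {n | ∃ k, 4 ≤ k ∧ n = F k - 1} ∪ {n | ∃ k, 4 ≤ k ∧ n = 2 * F k - 1}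

namespace FibAux

lemma fibWord_add (m : ℕ) : fibWord (m+2) = fibWord (m+1) ++ fibWord m := rfl

lemma F_add (m : ℕ) : F (m+2) = F (m+1) + F m := by
  simp [F, fibWord_add]

@[simp] lemma F0 : F 0 = 1 := rfl
@[simp] lemma F1 : F 1 = 1 := rfl
@[simp] lemma F2 : F 2 = 2 := rfl
@[simp] lemma F3 : F 3 = 3 := rfl
@[simp] lemma F4 : F 4 = 5 := rfl

lemma F_pos (m : ℕ) : 0 < F m := by
  induction m using Nat.strong_induction_on with
  | _ m ih =>
    match m with
    | 0 => simp
    | 1 => simp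
    | (m+2) =>
      have := ih m (by omega)
      rw [F_add]; omega

lemma F_le_succ (m : ℕ) : F m ≤ F (m+1) := by
  match m with
  | 0 => simp
  | (m+1) => rw [F_add]; have := F_pos m; omega

lemma F_mono : Monotone F := monotone_nat_of_le_succ F_le_succ

lemma F_lt_succ (m : ℕ) (h : 1 ≤ m) : F m < F (m+1) := by
  match m with
  | (m+1) => rw [F_add]; have := F_pos m; omega

lemma F_lt_of_lt {a b : ℕ} (ha : 1 ≤ a) (h : a < b) : F a < F b :=
  lt_of_lt_of_le (F_lt_succ a ha) (F_mono h)

lemma lt_of_F_lt {a b : ℕ} (h : F a < F b) : a < b := by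
  by_contra hc
  exact absurd (F_mono (not_lt.mp hc)) (by omega)

lemma self_le_F (m : ℕ) : m ≤ F (m+1) := by
  induction m with
  | zero => simp
  | succ n ih => rw [F_add]; have := F_pos n; omega

lemma lt_F_self (n : ℕ) : n < F (n+2) := by
  have h := self_le_F (n+1)
  have h2 : F (n+1+1) = F (n+2) := rfl
  omega

lemma fibWord_prefix_succ (m : ℕ) (h : 1 ≤ m) : fibWord m <+: fibWord (m+1) := by
  match m with
  | 1 => exact ⟨fibWord 0, rfl⟩
  | (m+2) => exact ⟨fibWord (m+1), rfl⟩

lemma fibWord_prefix {a b : ℕ} (ha : 1 ≤ a) (hab : a ≤ b) : fibWord a <+: fibWord b := by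
  induction b, hab using Nat.le_induction with
  | base => exact List.prefix_rfl
  | succ n hn ih => exact ih.trans (fibWord_prefix_succ n (by omega))

@[simp] lemma fibPrefix_length (ℓ : ℕ) : (fibPrefix ℓ).length = ℓ := by simp [fibPrefix]

lemma fibPrefix_getElem {i ℓ : ℕ} (h : i < ℓ) :
    (fibPrefix ℓ)[i]'(by simpa using h) = fibInf i := by
  simp [fibPrefix]

lemma fibInf_eq_getElem {m n : ℕ} (h1 : 1 ≤ m) (h2 : n < F m) :
    fibInf n = (fibWord m)[n]'(h2) := by
  have hn : n < (fibWord (n+2)).length := lt_F_self n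
  rw [fibInf, List.getD_eq_getElem _ _ hn]
  rcases le_total m (n+2) with h | h
  · exact ((fibWord_prefix h1 h).getElem h2).symm
  · exact (fibWord_prefix (show 1 ≤ n+2 by omega) h).getElem hn

lemma fibPrefix_F {m : ℕ} (h : 1 ≤ m) : fibPrefix (F m) = fibWord m := by
  apply List.ext_getElem (by simp [F])
  intro i h1 h2
  rw [fibPrefix_getElem (by simpa using h1)]
  exact fibInf_eq_getElem h (by simpa [F] using h1)

lemma fibPrefix_take {a b : ℕ} : (fibPrefix b).take a = fibPrefix (min a b) := by
  simp [fibPrefix, ← List.map_take, List.take_range]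

lemma fibPrefix_take_of_le {a b : ℕ} (h : a ≤ b) : (fibPrefix b).take a = fibPrefix a := by
  rw [fibPrefix_take, min_eq_left h]

lemma fibPrefix_prefix {a b : ℕ} (h : a ≤ b) : fibPrefix a <+: fibPrefix b := by
  rw [← fibPrefix_take_of_le h]; exact List.take_prefix _ _

@[simp] lemma fibPrefix_zero : fibPrefix 0 = [] := by simp [fibPrefix]

lemma fibPrefix_succ (n : ℕ) : fibPrefix (n+1) = fibPrefix n ++ [fibInf n] := by
  simp [fibPrefix, List.range_succ]

/-- extract letters from a decomposition of a fibPrefix -/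
lemma fibInf_of_append {n : ℕ} {w t : List Bool} (h : fibPrefix n = w ++ t) :
    ∀ i, (hi : i < t.length) → fibInf (w.length + i) = t[i] := by
  intro i hi
  have hlen : n = w.length + t.length := by
    have := congrArg List.length h; simpa using this
  have h2 : w.length + i < n := by omega
  rw [← fibPrefix_getElem h2]
  have : (fibPrefix n)[w.length + i]'(by simpa using h2) = (w ++ t)[w.length + i]'(by simp; omega) := by
    congr 1
  rw [this]
  rw [List.getElem_append_right (by omega)]
  congr 1
  omega

@[simp] lemma fibInf_zero : fibInf 0 = true := rfl

/-- self-similarity: fibPrefix (F (r+1) + i) = fibWord (r+1) ++ fibPrefix i for i ≤ F r -/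
lemma fibPrefix_SS {r i : ℕ} (hr : 1 ≤ r) (hi : i ≤ F r) :
    fibPrefix (F (r+1) + i) = fibWord (r+1) ++ fibPrefix i := by
  have h1 : F (r+1) + i ≤ F (r+2) := by rw [F_add]; omega
  have h2 : fibPrefix (F (r+2)) = fibWord (r+1) ++ fibWord r := by
    rw [fibPrefix_F (by omega)]; rfl
  calc fibPrefix (F (r+1) + i) = (fibPrefix (F (r+2))).take (F (r+1) + i) :=
        (fibPrefix_take_of_le h1).symm
    _ = (fibWord (r+1) ++ fibWord r).take ((fibWord (r+1)).length + i) := by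
        rw [h2]; rfl
    _ = fibWord (r+1) ++ (fibWord r).take i := by
        rw [List.take_append, List.take_of_length_le (by omega), Nat.add_sub_cancel_left]
    _ = fibWord (r+1) ++ fibPrefix i := by
        rw [← fibPrefix_F hr, fibPrefix_take, min_eq_left (by simpa using hi)]

/-- the morphism φ^k -/
def Phi (k : ℕ) (w : List Bool) : List Bool :=
  (w.map fun c => if c then fibWord (k+1) else fibWord k).flatten

@[simp] lemma Phi_nil (k : ℕ) : Phi k [] = [] := rfl

lemma Phi_append (k : ℕ) (a b : List Bool) : Phi k (a ++ b) = Phi k a ++ Phi k b := by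
  simp [Phi]

lemma Phi_single (k : ℕ) (c : Bool) : Phi k [c] = if c then fibWord (k+1) else fibWord k := by
  simp [Phi]

lemma Phi_true (k : ℕ) : Phi k [true] = fibWord (k+1) := by simp [Phi]

lemma Phi_false (k : ℕ) : Phi k [false] = fibWord k := by simp [Phi]

lemma Phi_fibWord (k m : ℕ) : Phi k (fibWord m) = fibWord (m + k) := by
  induction m using Nat.strong_induction_on with
  | _ m ih =>
    match m with
    | 0 => simp [Phi, fibWord]
    | 1 => simp [Phi, fibWord]; rw [Nat.add_comm]
    | (m+2) =>
      rw [fibWord_add, Phi_append, ih (m+1) (by omega), ih m (by omega)]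
      have h1 : m + 2 + k = (m + k) + 2 := by omega
      have h2 : m + 1 + k = (m + k) + 1 := by omega
      rw [h1, h2, fibWord_add]

def blk (k n : ℕ) : ℕ := (Phi k (fibPrefix n)).length

@[simp] lemma blk_zero (k : ℕ) : blk k 0 = 0 := by simp [blk]

lemma blk_succ (k n : ℕ) :
    blk k (n+1) = blk k n + (if fibInf n then F (k+1) else F k) := by
  rw [blk, fibPrefix_succ, Phi_append, List.length_append, Phi_single]
  rcases h : fibInf n <;> simp [h, blk, F]

lemma blk_lt_succ (k n : ℕ) : blk k n < blk k (n+1) := by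
  rw [blk_succ]
  have := F_pos k; have := F_pos (k+1)
  split <;> omega

lemma blk_strictMono (k : ℕ) : StrictMono (blk k) :=
  strictMono_nat_of_lt_succ (blk_lt_succ k)

lemma blk_le_self (k n : ℕ) : n ≤ blk k n := by
  induction n with
  | zero => simp
  | succ n ih => have := blk_lt_succ k n; omega

lemma blk_F (k : ℕ) {m : ℕ} (h : 1 ≤ m) : blk k (F m) = F (m + k) := by
  rw [blk, fibPrefix_F h, Phi_fibWord]; rfl

/-- fixed point lemma -/
lemma Phi_fibPrefix (k n : ℕ) : fibPrefix (blk k n) = Phi k (fibPrefix n) := by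
  have hn : n < F (n+2) := lt_F_self n
  have hsplit : fibWord (n+2) = fibPrefix n ++ (fibWord (n+2)).drop n := by
    rw [← fibPrefix_F (show 1 ≤ n+2 by omega), ← fibPrefix_take_of_le (le_of_lt hn),
      List.take_append_drop, fibPrefix_F (show 1 ≤ n+2 by omega)]
  have h2 : fibWord (n+2+k) = Phi k (fibPrefix n) ++ Phi k ((fibWord (n+2)).drop n) := by
    rw [← Phi_append, ← hsplit, Phi_fibWord]
  have hlen : blk k n ≤ F (n+2+k) := by
    have := congrArg List.length h2
    simp [F] at this ⊢
    rw [this]; exact Nat.le_add_right _ _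
  calc fibPrefix (blk k n) = (fibPrefix (F (n+2+k))).take (blk k n) :=
        (fibPrefix_take_of_le hlen).symm
    _ = (Phi k (fibPrefix n) ++ Phi k ((fibWord (n+2)).drop n)).take ((Phi k (fibPrefix n)).length) := by
        rw [fibPrefix_F (by omega), h2]; rfl
    _ = Phi k (fibPrefix n) := by rw [List.take_left]

/-- block content lemma -/
lemma blk_block (k n : ℕ) :
    fibPrefix (blk k (n+1)) =
      fibPrefix (blk k n) ++ (if fibInf n then fibWord (k+1) else fibWord k) := by
  rw [Phi_fibPrefix, Phi_fibPrefix, fibPrefix_succ, Phi_append, Phi_single]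

lemma Phi_comp (k : ℕ) (w : List Bool) : Phi k (Phi 1 w) = Phi (k+1) w := by
  induction w with
  | nil => simp
  | cons c w ih =>
    have : (c :: w) = [c] ++ w := rfl
    rw [this, Phi_append, Phi_append, Phi_append, ih]
    congr 1
    rcases c
    · rw [Phi_false, show fibWord 1 = [true] from rfl, Phi_true, Phi_false]
    · rw [Phi_true, show fibWord (1+1) = [true] ++ [false] from rfl, Phi_append,
        Phi_true, Phi_false, Phi_true]
      exact (fibWord_add k).symm

lemma blk_comp (k n : ℕ) : blk (k+1) n = blk k (blk 1 n) := by
  rw [blk, blk, Phi_fibPrefix, Phi_comp]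

/-- every position lies in a block -/
lemma blk_part (k s : ℕ) : ∃ n, blk k n ≤ s ∧ s < blk k (n+1) := by
  induction s with
  | zero => exact ⟨0, by simp, blk_lt_succ k 0⟩
  | succ s ih =>
    obtain ⟨n, h1, h2⟩ := ih
    by_cases h : s + 1 < blk k (n+1)
    · exact ⟨n, by omega, h⟩
    · exact ⟨n+1, by omega, by have := blk_lt_succ k (n+1); omega⟩

lemma fibWord_head (m : ℕ) (h : 1 ≤ m) : ∃ t, fibWord m = true :: t := by
  induction m using Nat.strong_induction_on with
  | _ m ih =>
    match m with
    | 1 => exact ⟨[], rfl⟩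
    | (m+2) =>
      obtain ⟨t, ht⟩ := ih (m+1) (by omega) (by omega)
      exact ⟨t ++ fibWord m, by rw [fibWord_add, ht]; rfl⟩

/-- block starts carry letter a -/
lemma fibInf_blk (k n : ℕ) (hk : 1 ≤ k) : fibInf (blk k n) = true := by
  have hb := blk_block k n
  have hhead : ∃ t, (if fibInf n then fibWord (k+1) else fibWord k) = true :: t := by
    split
    · exact fibWord_head (k+1) (by omega)
    · exact fibWord_head k hk
  obtain ⟨t, ht⟩ := hhead
  rw [ht] at hb
  have h0 := fibInf_of_append hb 0 (by simp)
  simpa using h0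

/-- near-commutation -/
lemma NC (k : ℕ) (hk : 1 ≤ k) : ∃ (w : List Bool) (x y : Bool), x ≠ y ∧
    fibWord (k+1) ++ fibWord k = w ++ [x, y] ∧
    fibWord k ++ fibWord (k+1) = w ++ [y, x] := by
  induction k, hk using Nat.le_induction with
  | base => exact ⟨[true], false, true, by decide, by decide, by decide⟩
  | succ k hk ih =>
    obtain ⟨w, x, y, hxy, h1, h2⟩ := ih
    refine ⟨fibWord (k+1) ++ w, y, x, hxy.symm, ?_, ?_⟩
    · rw [show k+1+1 = k+2 from rfl, fibWord_add, List.append_assoc, h2, ← List.append_assoc]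
    · rw [show k+1+1 = k+2 from rfl, fibWord_add, List.append_assoc, h1, ← List.append_assoc]

lemma NC_len {k : ℕ} {w : List Bool} {x y : Bool}
    (h : fibWord (k+1) ++ fibWord k = w ++ [x, y]) : w.length + 2 = F (k+2) := by
  have h2 : F (k+1) + F k = w.length + 2 := by
    simpa [F] using congrArg List.length h
  rw [F_add]; omega

def Agree (c s : ℕ) : Prop := ∀ i, i < c → fibInf (s + i) = fibInf i

lemma Agree.mono {c c' s : ℕ} (h : Agree c s) (hc : c' ≤ c) : Agree c' s :=
  fun i hi => h i (by omega)

lemma blk_one (k : ℕ) : blk k 1 = F (k+1) := by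
  rw [show (1:ℕ) = 0 + 1 from rfl, blk_succ]; simp

/-- (P1): positive block starts are at least F (k+1) -/
lemma P1 {k n : ℕ} (h : 0 < blk k n) : F (k+1) ≤ blk k n := by
  match n with
  | 0 => simp at h
  | (n+1) =>
    calc F (k+1) = blk k 1 := (blk_one k).symm
      _ ≤ blk k (n+1) := (blk_strictMono k).monotone (by omega)

/-- letter just after an `a`-block start at scale 1 is `b` -/
lemma letter_after_a {p : ℕ} (hp : fibInf p = true) : fibInf (blk 1 p + 1) = false := by
  have hb := blk_block 1 p
  rw [hp, if_pos rfl] at hb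
  have h1 := fibInf_of_append hb 1 (by simp [show fibWord (1+1) = [true, false] from rfl])
  simpa [show fibWord (1+1) = [true, false] from rfl] using h1

/-- The synchronization lemma: occurrences of the prefix of length `F (k+1) - 1`
only happen at scale-`k` block starts. -/
lemma OCC : ∀ k, 1 ≤ k → ∀ s, Agree (F (k+1) - 1) s → ∃ n, s = blk k n := by
  intro k hk
  induction k, hk using Nat.le_induction with
  | base =>
    intro s hA
    obtain ⟨n, h1, h2⟩ := blk_part 1 s
    rcases eq_or_lt_of_le h1 with he | hlt
    · exact ⟨n, he.symm⟩
    have hsz := blk_succ 1 n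
    have hs0 : fibInf s = true := by
      have := hA 0 (by norm_num)
      simpa using this
    rcases hfn : fibInf n with hb | ha
    · rw [hfn, if_neg (by simp)] at hsz
      simp only [F1] at hsz
      omega
    · rw [hfn, if_pos rfl] at hsz
      rw [show F (1+1) = 2 from rfl] at hsz
      have hseq : s = blk 1 n + 1 := by omega
      have := letter_after_a hfn
      rw [← hseq] at this
      rw [this] at hs0; exact absurd hs0 (by simp)
  | succ k hk ih =>
    intro s hA
    have hle : F (k+1) - 1 ≤ F (k+1+1) - 1 := by
      have := F_le_succ (k+1); omega
    obtain ⟨n, rfl⟩ := ih s (hA.mono hle)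
    obtain ⟨p, hp1, hp2⟩ := blk_part 1 n
    rcases eq_or_lt_of_le hp1 with he | hlt
    · exact ⟨p, by rw [blk_comp, ← he]⟩
    -- n is strictly inside a scale-1 block, so that block is "ab" and n = blk 1 p + 1
    have hsz := blk_succ 1 p
    have hfp : fibInf p = true := by
      rcases hfp : fibInf p with hb | ha
      · rw [hfp, if_neg (by simp)] at hsz; simp only [F1] at hsz; omega
      · rfl
    rw [hfp, if_pos rfl] at hsz
    rw [show F (1+1) = 2 from rfl] at hsz
    have hneq : n = blk 1 p + 1 := by omega
    -- letters at n and n+1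
    have hln : fibInf n = false := by rw [hneq]; exact letter_after_a hfp
    have hln1 : fibInf (n+1) = true := by
      have : n + 1 = blk 1 (p+1) := by omega
      rw [this]; exact fibInf_blk 1 (p+1) (le_refl 1)
    -- block contents: fibPrefix (blk k (n+2)) = fibPrefix (blk k n) ++ (u_k ++ u_{k+1})
    have hA1 := blk_block k n
    rw [hln, if_neg (by simp)] at hA1
    have hA2 := blk_block k (n+1)
    rw [hln1, if_pos rfl] at hA2
    have hC : fibPrefix (blk k (n+2)) =
        fibPrefix (blk k n) ++ (fibWord k ++ fibWord (k+1)) := by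
      rw [show n+2 = (n+1)+1 from rfl, hA2, hA1, List.append_assoc]
    -- near-commutation
    obtain ⟨w, x, y, hxy, hnc1, hnc2⟩ := NC k hk
    have hwlen := NC_len hnc1
    -- fibInf (blk k n + (w.length)) = y
    have hC' : fibPrefix (blk k (n+2)) =
        (fibPrefix (blk k n) ++ w) ++ [y, x] := by
      rw [hC, hnc2, ← List.append_assoc]
    have hy := fibInf_of_append hC' 0 (by simp)
    simp only [List.length_append, fibPrefix_length, Nat.add_zero, List.getElem_cons_zero] at hy
    -- fibInf (w.length) = x
    have hpre : fibPrefix (F (k+2)) = w ++ [x, y] := by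
      rw [fibPrefix_F (by omega : 1 ≤ k+2), fibWord_add, hnc1]
    have hx := fibInf_of_append hpre 0 (by simp)
    simp only [Nat.add_zero, List.getElem_cons_zero] at hx
    -- Agree at w.length
    have hAg := hA w.length (by
      have h12 : F (k+1+1) = F (k+2) := rfl
      omega)
    rw [hy, hx] at hAg
    exact absurd hAg.symm hxy

/-- (P2): Zeckendorf-style decomposition of block starts -/
lemma P2 {k j n : ℕ} (hj : k ≤ j) (h1 : F (j+1) ≤ blk k n) (h2 : blk k n < F (j+2)) :
    ∃ n', blk k n = F (j+1) + blk k n' ∧ blk k n' < F j := by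
  obtain ⟨m, hm1, hmk⟩ : ∃ m, 1 ≤ m ∧ m + k = j + 1 := ⟨j+1-k, by omega, by omega⟩
  have hFm : blk k (F m) = F (j+1) := by rw [blk_F k hm1, hmk]
  have hFm1 : blk k (F (m+1)) = F (j+2) := by
    rw [blk_F k (by omega : 1 ≤ m+1)]; congr 1; omega
  have hn1 : F m ≤ n := by
    by_contra hc
    exact absurd ((blk_strictMono k) (by omega : n < F m)) (by omega)
  have hn2 : n < F (m+1) := by
    by_contra hc
    exact absurd ((blk_strictMono k).monotone (not_lt.mp hc)) (by omega)
  obtain ⟨r, rfl⟩ : ∃ r, m = r + 1 := ⟨m-1, by omega⟩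
  have hE1 : F (r+1+1) = F (r+1) + F r := F_add r
  have hn' : n - F (r+1) < F r := by omega
  have key : fibPrefix n = fibWord (r+1) ++ fibPrefix (n - F (r+1)) := by
    rcases Nat.eq_zero_or_pos r with hr0 | hr1
    · subst hr0
      have hneq : n = 1 := by
        have e1 : F (0+1) = 1 := rfl
        have e2 : F (0+1+1) = 2 := rfl
        omega
      subst hneq
      simp [fibPrefix_succ]
      rfl
    · have := fibPrefix_SS hr1 (le_of_lt hn')
      rw [← this]; congr 1; omega
  refine ⟨n - F (r+1), ?_, ?_⟩
  · rw [blk, key, Phi_append, List.length_append]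
    have h3 : (Phi k (fibWord (r+1))).length = F (j+1) := by
      rw [Phi_fibWord]
      show F (r+1+k) = F (j+1)
      rw [show r+1+k = j+1 by omega]
    rw [h3]; rfl
  · rcases Nat.eq_zero_or_pos r with hr0 | hr1
    · have : n - F (r+1) = 0 := by
        subst hr0
        have e1 : F (0+1) = 1 := rfl
        have e0 : F 0 = 1 := rfl
        omega
      rw [this]; simpa using F_pos j
    · calc blk k (n - F (r+1)) < blk k (F r) := (blk_strictMono k) hn'
        _ = F j := by rw [blk_F k hr1, show r+k = j by omega]

/-- (Z'): no block start in the gap before a Fibonacci number -/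
lemma Zgap : ∀ m k n : ℕ, blk k n + F (k+1) < F m → F m < blk k n + F (k+2) → False := by
  intro m
  induction m using Nat.strong_induction_on with
  | _ m ih =>
    intro k n hlo hhi
    rcases Nat.eq_zero_or_pos (blk k n) with hx0 | hxpos
    · -- F (k+1) < F m < F (k+2): impossible
      rw [hx0] at hlo hhi
      have hm2 : k + 2 ≤ m := by
        by_contra hc
        exact absurd (F_mono (by omega : m ≤ k+1)) (by omega)
      exact absurd (F_mono hm2) (by omega)
    have hP1 := P1 hxpos
    by_cases hmA : m ≤ k + 2
    · -- case A
      have h1 := F_mono hmA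
      have h2 := F_add k
      have h3 := F_le_succ k
      omega
    by_cases hmB : m = k + 3
    · -- case B
      subst hmB
      have hk3 : F (k+3) = F (k+2) + F (k+1) := F_add (k+1)
      have hk2 : F (k+2) = F (k+1) + F k := F_add k
      have hup : blk k n < F (k+2) := by omega
      obtain ⟨n', he, hlt⟩ := P2 (le_refl k) hP1 hup
      have : blk k n' = 0 := by
        rcases Nat.eq_zero_or_pos (blk k n') with h0 | hp
        · exact h0
        · have := P1 hp
          have := F_le_succ k
          omega
      omega
    -- case C : m ≥ k + 4
    have hmC : k + 4 ≤ m := by omega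
    obtain ⟨r, rfl⟩ : ∃ r, m = r + 2 := ⟨m - 2, by omega⟩
    have hFr2 : F (r+2) = F (r+1) + F r := F_add r
    have hrk : F (k+2) ≤ F r := F_mono (by omega)
    have hge : F (r+1) ≤ blk k n := by omega
    have hlt2 : blk k n < F (r+2) := by omega
    obtain ⟨n', he, hlt'⟩ := P2 (by omega : k ≤ r) hge hlt2
    exact ih r (by omega) k n' (by omega) (by omega)

/-- (Z2'): no positive block start in the gap before twice a Fibonacci number -/
lemma Zgap2 : ∀ m k n : ℕ, 0 < blk k n →
    blk k n + F (k+1) < 2 * F m → 2 * F m < blk k n + F (k+2) → False := by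
  intro m k n hpos hlo hhi
  have hP1 := P1 hpos
  have hmk : k + 2 ≤ m := by
    by_contra hc
    have h1 : F m ≤ F (k+1) := F_mono (by omega)
    by_cases h2 : m ≤ k + 1
    · have := F_mono h2; omega
    ·
      omega
  have hxm : F m ≤ blk k n := by
    by_contra hc
    have : F m < F (k+2) := by omega
    exact absurd (F_mono hmk) (by omega)
  have hm1 : 1 ≤ m := by omega
  by_cases hcase : blk k n < F (m+1)
  · -- subtract F m
    obtain ⟨r, rfl⟩ : ∃ r, m = r + 1 := ⟨m-1, by omega⟩
    have hg : F (r+1) ≤ blk k n := hxm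
    obtain ⟨n', he, hlt'⟩ := P2 (by omega : k ≤ r) hg (by exact hcase)
    exact Zgap (r+1) k n' (by omega) (by omega)
  · -- F (m+1) ≤ x < F (m+2): subtract F (m+1)
    have hg : F (m+1) ≤ blk k n := not_lt.mp hcase
    have hFm2 : F (m+2) = F (m+1) + F m := F_add m
    have hle1 := F_le_succ m
    have hlt2 : blk k n < F (m+2) := by omega
    obtain ⟨n', he, hlt'⟩ := P2 (by omega : k ≤ m) hg hlt2
    obtain ⟨r, rfl⟩ : ∃ r, m = r + 2 := ⟨m-2, by omega⟩
    have hFr2 : F (r+2) = F (r+1) + F r := F_add r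
    have hb1 : F (r+2+1) = F (r+2) + F (r+1) := F_add (r+1)
    have hb2 : F (r+2+2) = F (r+2+1) + F (r+2) := F_add (r+2)
    exact Zgap r k n' (by omega) (by omega)

lemma pair_getElem {A w : List Bool} {p q p' q' : Bool} {i : ℕ} (hi : i < A.length + w.length) :
    (A ++ (w ++ [p,q]))[i]'(by simp; omega) = (A ++ (w ++ [p',q']))[i]'(by simp; omega) := by
  rcases Nat.lt_or_ge i A.length with h | h
  · rw [List.getElem_append_left h, List.getElem_append_left h]
  · rw [List.getElem_append_right h, List.getElem_append_right h,
      List.getElem_append_left (by omega), List.getElem_append_left (by omega)]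

lemma AGR1 {k i : ℕ} (hk : 1 ≤ k) (hi : i + 2 < F (k+2)) : fibInf (F (k+1) + i) = fibInf i := by
  obtain ⟨w, x, y, hxy, h1, h2⟩ := NC k hk
  have hwlen := NC_len h1
  have hpre3 : fibPrefix (F (k+3)) = fibWord (k+1) ++ (w ++ [y, x]) := by
    rw [fibPrefix_F (by omega : 1 ≤ k+3),
      show fibWord (k+3) = (fibWord (k+1) ++ fibWord k) ++ fibWord (k+1) from rfl,
      List.append_assoc, h2]
  have hpre2 : fibPrefix (F (k+2)) = ([] : List Bool) ++ (w ++ [x, y]) := by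
    rw [fibPrefix_F (by omega : 1 ≤ k+2), show fibWord (k+2) = fibWord (k+1) ++ fibWord k from rfl,
      h1, List.nil_append]
  have e1 : fibInf (F (k+1) + i) = (w ++ [y,x])[i]'(by simp; omega) :=
    fibInf_of_append hpre3 i (by simp; omega)
  have e0 : fibInf i = (w ++ [x,y])[i]'(by simp; omega) := by
    have := fibInf_of_append hpre2 i (by simp; omega)
    simpa using this
  rw [e1, e0, List.getElem_append_left (show i < w.length by omega),
    List.getElem_append_left (show i < w.length by omega)]

lemma AGR2 {k i : ℕ} (hk : 1 ≤ k) (hi : i + 2 < F (k+1) + F (k+2)) :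
    fibInf (F (k+2) + i) = fibInf i := by
  obtain ⟨w, x, y, hxy, h1, h2⟩ := NC k hk
  have hwlen := NC_len h1
  have hpre3 : fibPrefix (F (k+3)) = ([] : List Bool) ++ (fibWord (k+1) ++ (w ++ [y, x])) := by
    rw [fibPrefix_F (by omega : 1 ≤ k+3),
      show fibWord (k+3) = (fibWord (k+1) ++ fibWord k) ++ fibWord (k+1) from rfl,
      List.append_assoc, h2, List.nil_append]
  have hL : (fibWord (k+1)).length = F (k+1) := rfl
  have hmid : fibWord (k+1) ++ fibWord (k+2) = fibWord (k+1) ++ (w ++ [x, y]) := by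
    rw [show fibWord (k+2) = fibWord (k+1) ++ fibWord k from rfl, h1]
  have hpre4 : fibPrefix (F (k+4)) = fibWord (k+2) ++ (fibWord (k+1) ++ (w ++ [x, y])) := by
    rw [fibPrefix_F (by omega : 1 ≤ k+4),
      show fibWord (k+4) = (fibWord (k+2) ++ fibWord (k+1)) ++ fibWord (k+2) from rfl,
      List.append_assoc, hmid]
  have e1 : fibInf (F (k+2) + i) = (fibWord (k+1) ++ (w ++ [x,y]))[i]'(by simp; omega) :=
    fibInf_of_append hpre4 i (by simp; omega)
  have e0 : fibInf i = (fibWord (k+1) ++ (w ++ [y,x]))[i]'(by simp; omega) := by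
    have := fibInf_of_append hpre3 i (by simp; omega)
    simpa using this
  rw [e1, e0]
  exact pair_getElem (by omega)

lemma occursAt_iff {c ℓ s : ℕ} :
    OccursAt (fibPrefix c) (fibPrefix ℓ) s ↔ s + c ≤ ℓ ∧ Agree c s := by
  constructor
  · rintro ⟨h1, h2⟩
    simp only [fibPrefix_length] at h1 h2
    refine ⟨h1, fun i hi => ?_⟩
    have hsi : s + i < ℓ := by omega
    have h3 : (((fibPrefix ℓ).drop s).take c)[i]'(by simp; omega) =
        (fibPrefix c)[i]'(by simpa using hi) := by
      exact List.getElem_of_eq h2 _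
    rw [List.getElem_take, List.getElem_drop, fibPrefix_getElem hsi, fibPrefix_getElem hi] at h3
    exact h3
  · rintro ⟨h1, hA⟩
    refine ⟨by simpa using h1, ?_⟩
    rw [fibPrefix_length]
    apply List.ext_getElem
    · simp; omega
    · intro i hL hR
      have hi : i < c := by simpa using hR
      rw [List.getElem_take, List.getElem_drop, fibPrefix_getElem (show s + i < ℓ by omega),
        fibPrefix_getElem hi]
      exact hA i hi

lemma isCover_self {α : Type*} (T : List α) : IsCover T T := by
  have hocc : OccursAt T T 0 := ⟨by omega, by simp⟩
  exact ⟨⟨0, hocc⟩, fun q hq => ⟨0, hocc, by omega, by omega⟩⟩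

lemma cover_length_pos {α : Type*} {C T : List α} (h : IsCover C T) (hT : 0 < T.length) :
    0 < C.length := by
  obtain ⟨i, _, hi1, hi2⟩ := h.2 0 hT
  omega

lemma cover_length_le {α : Type*} {C T : List α} (h : IsCover C T) : C.length ≤ T.length := by
  obtain ⟨i, hi⟩ := h.1
  have := hi.1; omega

lemma cover_prefix {α : Type*} {C T : List α} (h : IsCover C T) (hT : 0 < T.length) :
    C <+: T := by
  obtain ⟨i, hocc, hi1, _⟩ := h.2 0 hT
  have hi0 : i = 0 := by omega
  subst hi0
  rw [List.prefix_iff_eq_take]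
  obtain ⟨h1', h2'⟩ := hocc
  rw [List.drop_zero] at h2'
  exact h2'.symm

lemma occursAt_trans {α : Type*} {C T D : List α} {i j : ℕ}
    (h1 : OccursAt C T i) (h2 : OccursAt D C j) : OccursAt D T (i + j) := by
  obtain ⟨hi, hC⟩ := h1
  obtain ⟨hj, hD⟩ := h2
  refine ⟨by omega, ?_⟩
  conv_rhs => rw [← hD, ← hC]
  rw [List.drop_take, List.drop_drop, List.take_take, min_eq_left (by omega)]

lemma cover_trans {α : Type*} {C T D : List α} (h1 : IsCover D C) (h2 : IsCover C T) :
    IsCover D T := by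
  obtain ⟨⟨i0, hi0⟩, hcov2⟩ := h2
  obtain ⟨⟨j0, hj0⟩, hcov1⟩ := h1
  refine ⟨⟨i0 + j0, occursAt_trans hi0 hj0⟩, fun q hq => ?_⟩
  obtain ⟨i, hocc, hiq, hqi⟩ := hcov2 q hq
  have hqC : q - i < C.length := by omega
  obtain ⟨j, hocc', hjq, hqj⟩ := hcov1 (q - i) hqC
  exact ⟨i + j, occursAt_trans hocc hocc', by omega, by omega⟩

lemma covLen_set_nonempty {α : Type*} (T : List α) :
    {c | ∃ C : List α, C.length = c ∧ IsCover C T}.Nonempty :=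
  ⟨T.length, T, rfl, isCover_self T⟩

lemma covLen_le {α : Type*} {T C : List α} (h : IsCover C T) : covLen T ≤ C.length :=
  Nat.sInf_le ⟨C, rfl, h⟩

lemma covLen_spec {α : Type*} (T : List α) : ∃ C : List α, C.length = covLen T ∧ IsCover C T :=
  Nat.sInf_mem (covLen_set_nonempty T)

lemma superprimitive_iff_covLen {α : Type*} (T : List α) :
    Superprimitive T ↔ covLen T = T.length := by
  constructor
  · intro hs
    obtain ⟨C, hC, hcov⟩ := covLen_spec T
    have h1 : covLen T ≤ T.length := covLen_le (isCover_self T)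
    rcases eq_or_lt_of_le h1 with he | hlt
    · exact he
    · exact absurd ⟨C, hcov, by omega⟩ hs
  · rintro he ⟨C, hcov, hlt⟩
    have := covLen_le hcov
    omega

lemma kinterval {c : ℕ} (hc : 1 ≤ c) : ∃ k, 1 ≤ k ∧ F (k+1) ≤ c + 1 ∧ c + 2 ≤ F (k+2) := by
  induction c with
  | zero => omega
  | succ c ih =>
    rcases Nat.eq_zero_or_pos c with h0 | hpos
    · subst h0
      refine ⟨1, le_refl 1, ?_, ?_⟩
      · rw [show F (1+1) = 2 from rfl]
      · rw [show F (1+2) = 3 from rfl]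
    · obtain ⟨k, hk, h1, h2⟩ := ih hpos
      by_cases hcase : c + 3 ≤ F (k+2)
      · exact ⟨k, hk, by omega, hcase⟩
      · have heq : F (k+2) = c + 2 := by omega
        refine ⟨k+1, by omega, by have hb : F (k+1+1) = F (k+2) := rfl; omega, ?_⟩
        have hb1 : F (k+1+2) = F (k+1+1) + F (k+1) := F_add (k+1)
        have hb2 : F (k+1+1) = F (k+2) := rfl
        have := F_pos (k+1)
        omega

/-- superprimitivity of prefixes with length F m - 1 or 2 F m - 1 -/
lemma super_main {ℓ : ℕ} (hl : 1 ≤ ℓ)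
    (hform : (∃ m, ℓ + 1 = F m) ∨ (∃ m, ℓ + 1 = 2 * F m)) :
    Superprimitive (fibPrefix ℓ) := by
  rintro ⟨C, hcov, hlt⟩
  rw [fibPrefix_length] at hlt
  have hTpos : 0 < (fibPrefix ℓ).length := by simp; omega
  have hpre := cover_prefix hcov hTpos
  have hCpos := cover_length_pos hcov hTpos
  have hCle : C.length ≤ ℓ := by omega
  rw [List.prefix_iff_eq_take] at hpre
  have hCeq : C = fibPrefix C.length :=
    hpre.trans (fibPrefix_take_of_le hCle)
  rw [hCeq] at hcov
  set c := C.length with hc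
  obtain ⟨k, hk, hk1, hk2⟩ := kinterval (show 1 ≤ c by omega)
  -- occurrence ending at ℓ
  obtain ⟨i, hiocc, hi1, hi2⟩ := hcov.2 (ℓ - 1) (by simp; omega)
  rw [fibPrefix_length] at hi2
  rw [occursAt_iff] at hiocc
  have hieq : i + c = ℓ := by omega
  have hipos : 0 < i := by omega
  have hAg : Agree (F (k+1) - 1) i := hiocc.2.mono (by omega)
  obtain ⟨n, rfl⟩ := OCC k hk i hAg
  have hP1' := P1 (show 0 < blk k n from hipos)
  rcases eq_or_lt_of_le hk1 with hce | hclt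
  · -- c + 1 = F (k+1): look at the occurrence covering position c
    obtain ⟨i', hiocc', hi1', hi2'⟩ := hcov.2 c (by simp; omega)
    rw [fibPrefix_length] at hi2'
    rw [occursAt_iff] at hiocc'
    have hi'pos : 0 < i' := by omega
    obtain ⟨n', rfl⟩ := OCC k hk i' (hiocc'.2.mono (by omega))
    have := P1 (show 0 < blk k n' from hi'pos)
    omega
  · rcases hform with ⟨m, hm⟩ | ⟨m, hm⟩
    · exact Zgap m k n (by omega) (by omega)
    · exact Zgap2 m k n hipos (by omega) (by omega)

lemma cover_interval1 {k ℓ : ℕ} (hk : 1 ≤ k) (h1 : 2 * F (k+1) ≤ ℓ)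
    (h2 : ℓ + 2 ≤ F (k+1) + F (k+2)) :
    ∃ c, 1 ≤ c ∧ c < ℓ ∧ IsCover (fibPrefix c) (fibPrefix ℓ) := by
  have hFp := F_pos (k+1)
  have hFp2 := F_pos (k+2)
  set c := ℓ - F (k+1) with hcdef
  have hc1 : F (k+1) ≤ c := by omega
  have hc2 : c + 2 ≤ F (k+2) := by omega
  have hceq : F (k+1) + c = ℓ := by omega
  have hocc0 : OccursAt (fibPrefix c) (fibPrefix ℓ) 0 :=
    occursAt_iff.mpr ⟨by omega, fun i hi => by rw [Nat.zero_add]⟩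
  have hocc1 : OccursAt (fibPrefix c) (fibPrefix ℓ) (F (k+1)) :=
    occursAt_iff.mpr ⟨by omega, fun i hi => AGR1 hk (by omega)⟩
  refine ⟨c, by omega, by omega, ⟨0, hocc0⟩, fun q hq => ?_⟩
  rw [fibPrefix_length] at hq
  by_cases hqc : q < c
  · exact ⟨0, hocc0, by omega, by simp; omega⟩
  · exact ⟨F (k+1), hocc1, by omega, by simp; omega⟩

lemma cover_interval2 {k ℓ : ℕ} (hk : 1 ≤ k) (h1 : F (k+1) + F (k+2) ≤ ℓ)
    (h2 : ℓ + 2 ≤ 2 * F (k+2)) :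
    ∃ c, 1 ≤ c ∧ c < ℓ ∧ IsCover (fibPrefix c) (fibPrefix ℓ) := by
  have hFp := F_pos (k+1)
  have hFp2 := F_pos (k+2)
  have hFle := F_le_succ k
  have hFle2 := F_le_succ (k+1)
  have hFadd : F (k+2) = F (k+1) + F k := F_add k
  set c := ℓ - F (k+2) with hcdef
  have hc1 : F (k+1) ≤ c := by omega
  have hc2 : c + 2 ≤ F (k+2) := by omega
  have hceq : F (k+2) + c = ℓ := by omega
  have hocc0 : OccursAt (fibPrefix c) (fibPrefix ℓ) 0 :=
    occursAt_iff.mpr ⟨by omega, fun i hi => by rw [Nat.zero_add]⟩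
  have hocc1 : OccursAt (fibPrefix c) (fibPrefix ℓ) (F (k+1)) :=
    occursAt_iff.mpr ⟨by omega, fun i hi => AGR1 hk (by omega)⟩
  have hocc2 : OccursAt (fibPrefix c) (fibPrefix ℓ) (F (k+2)) :=
    occursAt_iff.mpr ⟨by omega, fun i hi => AGR2 hk (by omega)⟩
  refine ⟨c, by omega, by omega, ⟨0, hocc0⟩, fun q hq => ?_⟩
  rw [fibPrefix_length] at hq
  by_cases hqc : q < c
  · exact ⟨0, hocc0, by omega, by simp; omega⟩
  by_cases hqc2 : q < F (k+1) + c
  · exact ⟨F (k+1), hocc1, by omega, by simp; omega⟩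
  · exact ⟨F (k+2), hocc2, by omega, by simp; omega⟩

lemma interval_decomp {ℓ : ℕ} (h6 : 6 ≤ ℓ)
    (hnf1 : ∀ m, ℓ + 1 ≠ F m) (hnf2 : ∀ m, ℓ + 1 ≠ 2 * F m) :
    ∃ k, 1 ≤ k ∧ ((2 * F (k+1) ≤ ℓ ∧ ℓ + 2 ≤ F (k+1) + F (k+2)) ∨
      (F (k+1) + F (k+2) ≤ ℓ ∧ ℓ + 2 ≤ 2 * F (k+2))) := by
  set P : ℕ → Prop := fun k => 2 * F (k+1) ≤ ℓ with hP
  have hP2 : P 2 := by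
    show 2 * F (2+1) ≤ ℓ
    rw [show F (2+1) = 3 from rfl]; omega
  set k := Nat.findGreatest P ℓ with hkdef
  have hPk : 2 * F (k+1) ≤ ℓ := Nat.findGreatest_spec (m := 2) (by omega) hP2
  have hk2 : 2 ≤ k := Nat.le_findGreatest (by omega) hP2
  have hkle : k ≤ ℓ := Nat.findGreatest_le ℓ
  have hnot : ¬ (2 * F (k+2) ≤ ℓ) := by
    by_cases hkl : k + 1 ≤ ℓ
    · have hng := Nat.findGreatest_is_greatest (show k < k+1 by omega) hkl
      intro hcon
      apply hng
      show 2 * F (k+1+1) ≤ ℓ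
      have hb : F (k+1+1) = F (k+2) := rfl
      omega
    · have hke : k = ℓ := by omega
      have hge := self_le_F ℓ
      rw [hke] at hPk
      omega
  refine ⟨k, by omega, ?_⟩
  have hF3 : F (k+3) = F (k+2) + F (k+1) := F_add (k+1)
  have h1 := hnf1 (k+3)
  have h2 := hnf2 (k+2)
  omega


lemma mem_SFib_iff {ℓ : ℕ} (hl : 1 ≤ ℓ) :
    ℓ ∈ SFib ↔ (∃ m, ℓ + 1 = F m) ∨ (∃ m, ℓ + 1 = 2 * F m) := by
  constructor
  · intro h
    simp only [SFib, Set.mem_union, Set.mem_insert_iff, Set.mem_singleton_iff,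
      Set.mem_setOf_eq] at h
    rcases h with ((h | h | h | h) | ⟨m, hm, he⟩) | ⟨m, hm, he⟩
    · exact Or.inl ⟨2, by rw [h, F2]⟩
    · exact Or.inl ⟨3, by rw [h, F3]⟩
    · exact Or.inr ⟨2, by rw [h, F2]⟩
    · exact Or.inr ⟨3, by rw [h, F3]⟩
    · exact Or.inl ⟨m, by have := F_pos m; omega⟩
    · exact Or.inr ⟨m, by have := F_pos m; omega⟩
  · intro h
    simp only [SFib, Set.mem_union, Set.mem_insert_iff, Set.mem_singleton_iff,
      Set.mem_setOf_eq]
    rcases h with ⟨m, hm⟩ | ⟨m, hm⟩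
    · by_cases hm4 : 4 ≤ m
      · exact Or.inl (Or.inr ⟨m, hm4, by omega⟩)
      · interval_cases m <;> simp only [F0, F1, F2, F3] at hm <;> omega
    · by_cases hm4 : 4 ≤ m
      · exact Or.inr ⟨m, hm4, by omega⟩
      · interval_cases m <;> simp only [F0, F1, F2, F3] at hm <;> omega

lemma key_iff (ℓ : ℕ) (hl : 1 ≤ ℓ) : Superprimitive (fibPrefix ℓ) ↔ ℓ ∈ SFib := by
  constructor
  · intro hs
    rw [mem_SFib_iff hl]
    by_contra hnf
    push_neg at hnf
    obtain ⟨hnf1, hnf2⟩ := hnf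
    have h6 : 6 ≤ ℓ := by
      by_contra h
      interval_cases ℓ
      · exact hnf1 2 (by rw [F2])
      · exact hnf1 3 (by rw [F3])
      · exact hnf2 2 (by rw [F2])
      · exact hnf1 4 (by rw [F4])
      · exact hnf2 3 (by rw [F3])
    obtain ⟨k, hk, hcase⟩ := interval_decomp h6 hnf1 hnf2
    rcases hcase with ⟨h1, h2⟩ | ⟨h1, h2⟩
    · obtain ⟨c, hc1, hc2, hcov⟩ := cover_interval1 hk h1 h2
      exact hs ⟨fibPrefix c, hcov, by simpa using hc2⟩
    · obtain ⟨c, hc1, hc2, hcov⟩ := cover_interval2 hk h1 h2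
      exact hs ⟨fibPrefix c, hcov, by simpa using hc2⟩
  · intro hmem
    exact super_main hl ((mem_SFib_iff hl).mp hmem)

end FibAux


open FibAux in
/-- (a) For every `ℓ ≥ 1`, the prefix `Fib[0..ℓ)` is superprimitive
(i.e., `Cov_Fib[ℓ] = ℓ`) iff `ℓ ∈ S`; (b) for every `ℓ ≥ 1`, `Cov_Fib[ℓ] ∈ S`. -/
theorem stmt10 :
    (∀ ℓ, 1 ≤ ℓ →
      ((Superprimitive (fibPrefix ℓ) ↔ ℓ ∈ SFib) ∧ (covFib ℓ = ℓ ↔ ℓ ∈ SFib))) ∧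
    (∀ ℓ, 1 ≤ ℓ → covFib ℓ ∈ SFib) := by
  constructor
  · intro ℓ hl
    refine ⟨key_iff ℓ hl, ?_⟩
    have h := superprimitive_iff_covLen (fibPrefix ℓ)
    rw [fibPrefix_length] at h
    rw [covFib, ← h]
    exact key_iff ℓ hl
  · intro ℓ hl
    obtain ⟨C, hClen, hcov⟩ := covLen_spec (fibPrefix ℓ)
    have hTpos : 0 < (fibPrefix ℓ).length := by simp; omega
    have hCpos := cover_length_pos hcov hTpos
    have hpre := cover_prefix hcov hTpos
    have hCle : C.length ≤ ℓ := by
      have := cover_length_le hcov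
      simpa using this
    rw [List.prefix_iff_eq_take] at hpre
    have hCeq : C = fibPrefix C.length := hpre.trans (fibPrefix_take_of_le hCle)
    rw [hCeq] at hcov
    have hsup : Superprimitive (fibPrefix C.length) := by
      rintro ⟨D, hD, hDlt⟩
      rw [fibPrefix_length] at hDlt
      have := covLen_le (cover_trans hD hcov)
      omega
    have hmem := (key_iff C.length (by omega)).mp hsup
    rw [covFib, ← hClen]
    exact hmem
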